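/- arXiv:1810.03116 — 4 statements merged into one kernel-verified Lean document; each statement's English description precedes it below -/
import Mathlib

section
/- Let M be a 3×3 real symmetric positive-definite matrix with entries ψ_{jk} (so ψ_{jk} = ψ_{kj}). Then tr(M⁻¹) = 1/ψ_{11} + 1/ψ_{22} + 1/ψ_{33} holds if and only if ψ_{12} = ψ_{13} = ψ_{23} = 0. -/
set_option maxHeartbeats 1000000 in
theorem trace_inv_eq_sum_inv_diag_3x3_iff (M : Matrix (Fin 3) (Fin 3) ℝ)
    (hsymm : M.IsSymm) (hpd : M.PosDef) :
    (M⁻¹).trace = 1 / M 0 0 + 1 / M 1 1 + 1 / M 2 2 ↔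
      M 0 1 = 0 ∧ M 0 2 = 0 ∧ M 1 2 = 0 := by
  have h10 : M 1 0 = M 0 1 := hsymm.apply 0 1
  have h20 : M 2 0 = M 0 2 := hsymm.apply 0 2
  have h21 : M 2 1 = M 1 2 := hsymm.apply 1 2
  set a := M 0 0 with ha'
  set b := M 1 1 with hb'
  set c := M 2 2 with hc'
  set p := M 0 1 with hp'
  set q := M 0 2 with hq'
  set r := M 1 2 with hr'
  -- quadratic form values
  have quad : ∀ x y z : ℝ, ![x, y, z] ≠ 0 →
      0 < a*x*x + b*y*y + c*z*z + 2*p*x*y + 2*q*x*z + 2*r*y*z := by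
    intro x y z hne
    have := hpd.dotProduct_mulVec_pos hne
    simp only [dotProduct, Matrix.mulVec, Fin.sum_univ_three, star_trivial] at this
    simp only [Matrix.cons_val_zero, Matrix.cons_val_one, Matrix.head_cons,
      Matrix.cons_val_two, Matrix.tail_cons] at this
    rw [h10, h20, h21] at this
    linarith
  have ha : 0 < a := by
    have := quad 1 0 0 (by intro h; have := congrFun h 0; simp at this)
    nlinarith
  have hb : 0 < b := by
    have := quad 0 1 0 (by intro h; have := congrFun h 1; simp at this)
    nlinarith
  have hc : 0 < c := by
    have := quad 0 0 1 (by intro h; have := congrFun h 2; simp at this)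
    nlinarith
  have hab : p * p < a * b := by
    have := quad p (-a) 0 (by intro h; have := congrFun h 1; simp at this; linarith)
    nlinarith
  have hac : q * q < a * c := by
    have := quad q 0 (-a) (by intro h; have := congrFun h 2; simp at this; linarith)
    nlinarith
  have hbc : r * r < b * c := by
    have := quad 0 r (-b) (by intro h; have := congrFun h 2; simp at this; linarith)
    nlinarith
  have hdet : M.det = a*b*c - a*r*r - b*q*q - c*p*p + 2*p*q*r := by
    rw [Matrix.det_fin_three, h10, h20, h21]; ring
  have hdetpos : (0:ℝ) < a*b*c - a*r*r - b*q*q - c*p*p + 2*p*q*r := by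
    rw [← hdet]; exact hpd.det_pos
  have hdetne : M.det ≠ 0 := by rw [hdet]; exact ne_of_gt hdetpos
  have htr : (M⁻¹).trace =
      ((b*c - r*r) + (a*c - q*q) + (a*b - p*p)) / M.det := by
    rw [Matrix.inv_def, Matrix.trace_smul, Matrix.adjugate_fin_three, Ring.inverse_eq_inv]
    rw [Matrix.trace_fin_three]
    simp only [Matrix.cons_val', Matrix.cons_val_zero, Matrix.cons_val_one, Matrix.head_cons,
      Matrix.cons_val_two, Matrix.tail_cons, Matrix.empty_val', Matrix.cons_val_fin_one,
      Matrix.head_fin_const, smul_eq_mul, Matrix.of_apply]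
    rw [h10, h20, h21]
    field_simp
    rw [← ha', ← hb', ← hc', ← hp', ← hq', ← hr']; ring
  rw [htr, hdet]
  constructor
  · intro heq
    -- clear denominators
    have hane : a ≠ 0 := ne_of_gt ha
    have hbne : b ≠ 0 := ne_of_gt hb
    have hcne : c ≠ 0 := ne_of_gt hc
    have hE : a * (b*q - p*r)^2 + b * (c*p - q*r)^2 + c * (a*r - p*q)^2
        + a*r*r*(a*b - p*p) + b*q*q*(b*c - r*r) + c*p*p*(a*c - q*q) = 0 := by
      have hdne : (a*b*c - a*r*r - b*q*q - c*p*p + 2*p*q*r) ≠ 0 := ne_of_gt hdetpos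
      have h1 := (div_eq_iff hdne).mp heq
      have h0 : ((b*c - r*r) + (a*c - q*q) + (a*b - p*p)) * (a*b*c)
          = (a*b*c - a*r*r - b*q*q - c*p*p + 2*p*q*r) * (b*c + a*c + a*b) := by
        have h2 := congrArg (fun t => t * (a*b*c)) h1
        rw [h2]
        field_simp
      linear_combination h0
    have t1 : 0 ≤ a * (b*q - p*r)^2 := by positivity
    have t2 : 0 ≤ b * (c*p - q*r)^2 := by positivity
    have t3 : 0 ≤ c * (a*r - p*q)^2 := by positivity
    have habp : 0 < a*b - p*p := by linarith
    have hacq : 0 < a*c - q*q := by linarith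
    have hbcr : 0 < b*c - r*r := by linarith
    have t4 : 0 ≤ a*r*r*(a*b - p*p) := by
      have := mul_nonneg (mul_nonneg ha.le (mul_self_nonneg r)) habp.le
      linarith
    have t5 : 0 ≤ b*q*q*(b*c - r*r) := by
      have := mul_nonneg (mul_nonneg hb.le (mul_self_nonneg q)) hbcr.le
      linarith
    have t6 : 0 ≤ c*p*p*(a*c - q*q) := by
      have := mul_nonneg (mul_nonneg hc.le (mul_self_nonneg p)) hacq.le
      linarith
    have hr0 : r = 0 := by
      by_contra h
      have := mul_pos (mul_pos ha (mul_self_pos.mpr h)) habp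
      linarith
    have hq0 : q = 0 := by
      by_contra h
      have := mul_pos (mul_pos hb (mul_self_pos.mpr h)) hbcr
      linarith
    have hp0 : p = 0 := by
      by_contra h
      have := mul_pos (mul_pos hc (mul_self_pos.mpr h)) hacq
      linarith
    exact ⟨hp0, hq0, hr0⟩
  · rintro ⟨hp0, hq0, hr0⟩
    rw [hp0, hq0, hr0]
    field_simp
    ring
end

section
/- Let N be a natural number with N ≥ 4, and let α, θ, a, d, σ be real numbers with a ≠ 0, d ≠ 0, σ ≠ 0. Define the 3×3 real matrix F by F_{11} = (4/a²)·Σ_{i=1}^{N} sin²α·cos²θ·cos²(2πi/N)/(d²σ²), F_{22} = (4/a²)·Σ_{i=1}^{N} sin²α·cos²θ·sin²(2πi/N)/(d²σ²), F_{33} = (4/a²)·Σ_{i=1}^{N} sin²α·tan²(θ−α)·cos²θ/(d²σ²), F_{12} = F_{21} = (4/a²)·Σ_{i=1}^{N} sin²α·cos²θ·sin(2πi/N)·cos(2πi/N)/(d²σ²), F_{13} = F_{31} = (4/a²)·Σ_{i=1}^{N} sin²α·tan(θ−α)·cos²θ·cos(2πi/N)/(d²σ²), and F_{23} = F_{32}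 = (4/a²)·Σ_{i=1}^{N} sin²α·tan(θ−α)·cos²θ·sin(2πi/N)/(d²σ²). Then F is the diagonal matrix with diagonal entries (2N·sin²α·cos²θ/(a²d²σ²), 2N·sin²α·cos²θ/(a²d²σ²), 4N·sin²α·tan²(θ−α)·cos²θ/(a²d²σ²)); in particular F_{12} = F_{13} = F_{23} = 0 and F_{11} = F_{22}. -/
open Real Finset

open Complex in
lemma geom_icc (N : ℕ) (z : ℂ) (hz1 : z ≠ 1) (hzN : z ^ N = 1) :
    ∑ i ∈ Finset.Icc 1 N, z ^ i = 0 := by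
  rw [← Finset.Ico_add_one_right_eq_Icc, Finset.sum_Ico_eq_sum_range]
  have h := geom_sum_eq hz1 N
  calc ∑ i ∈ Finset.range N, z ^ (1 + i)
      = z * ∑ i ∈ Finset.range N, z ^ i := by
        rw [Finset.mul_sum]; congr 1; ext i; rw [pow_add, pow_one]
    _ = 0 := by rw [h, hzN]; simp

lemma exp_ne_one (t : ℝ) (ht : ∀ n : ℤ, t ≠ n * (2 * Real.pi)) :
    Complex.exp (t * Complex.I) ≠ 1 := by
  simp only [ne_eq, Complex.exp_eq_one_iff]
  push_neg
  intro n h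
  apply ht n
  have : (t : ℂ) = n * (2 * Real.pi) := by
    have h2 : (t : ℂ) * Complex.I = ((n : ℂ) * (2 * Real.pi)) * Complex.I := by
      rw [h]; ring
    exact mul_right_cancel₀ Complex.I_ne_zero h2
  exact_mod_cast this

lemma sum_cos_sin (N : ℕ) (t : ℝ) (ht1 : Complex.exp (t * Complex.I) ≠ 1)
    (htN : Complex.exp (t * Complex.I) ^ N = 1) :
    (∑ i ∈ Finset.Icc 1 N, Real.cos (t * i) = 0) ∧
    (∑ i ∈ Finset.Icc 1 N, Real.sin (t * i) = 0) := by
  have h := geom_icc N _ ht1 htN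
  have hre : ∀ i : ℕ, (Complex.exp (t * Complex.I) ^ i).re = Real.cos (t * i) := by
    intro i
    rw [← Complex.exp_nat_mul]
    have : (i : ℂ) * (t * Complex.I) = ((t * i : ℝ) : ℂ) * Complex.I := by push_cast; ring
    rw [this, Complex.exp_ofReal_mul_I_re]
  have him : ∀ i : ℕ, (Complex.exp (t * Complex.I) ^ i).im = Real.sin (t * i) := by
    intro i
    rw [← Complex.exp_nat_mul]
    have : (i : ℂ) * (t * Complex.I) = ((t * i : ℝ) : ℂ) * Complex.I := by push_cast; ring
    rw [this, Complex.exp_ofReal_mul_I_im]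
  constructor
  · have := congrArg Complex.re h
    rwa [Complex.re_sum, Finset.sum_congr rfl fun i _ => hre i] at this
  · have := congrArg Complex.im h
    rwa [Complex.im_sum, Finset.sum_congr rfl fun i _ => him i] at this

lemma sums_spec (N : ℕ) (hN : 4 ≤ N) :
    (∑ i ∈ Finset.Icc 1 N, Real.cos (2 * Real.pi * i / N) = 0) ∧
    (∑ i ∈ Finset.Icc 1 N, Real.sin (2 * Real.pi * i / N) = 0) ∧
    (∑ i ∈ Finset.Icc 1 N, Real.cos (2 * (2 * Real.pi * i / N)) = 0) ∧
    (∑ i ∈ Finset.Icc 1 N, Real.sin (2 * (2 * Real.pi * i / N)) = 0) := by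
  have hN0 : (N : ℝ) ≠ 0 := by positivity
  have h2pi : (2 * Real.pi) ≠ 0 := by positivity
  have key : ∀ t : ℝ, (∀ n : ℤ, t ≠ n * (2 * Real.pi)) →
      ((t * N : ℝ) = 2 * Real.pi ∨ (t * N : ℝ) = 2 * (2 * Real.pi)) →
      (∑ i ∈ Finset.Icc 1 N, Real.cos (t * i) = 0) ∧
      (∑ i ∈ Finset.Icc 1 N, Real.sin (t * i) = 0) := by
    intro t ht htN
    apply sum_cos_sin N t (exp_ne_one t ht)
    rw [← Complex.exp_nat_mul]
    rcases htN with h | h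
    · have hc := congrArg (Complex.ofReal) h
      push_cast at hc
      rw [show (N:ℂ) * (↑t * Complex.I) = (↑t * ↑N) * Complex.I by ring, hc,
        Complex.exp_two_pi_mul_I]
    · have hc := congrArg (Complex.ofReal) h
      push_cast at hc
      rw [show (N:ℂ) * (↑t * Complex.I) = (↑t * ↑N) * Complex.I by ring, hc,
        show ((2:ℂ) * (2 * ↑Real.pi)) * Complex.I
          = 2 * ↑Real.pi * Complex.I + 2 * ↑Real.pi * Complex.I by ring,
        Complex.exp_add, Complex.exp_two_pi_mul_I]
      norm_num
  have h1 := key (2 * Real.pi / N) (by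
      intro n h
      have h' : ((n * N : ℤ) : ℝ) * (2 * Real.pi) = 1 * (2 * Real.pi) := by
        push_cast
        field_simp at h
        linear_combination (-2 * Real.pi) * h
      have hn : (n * N : ℤ) = 1 := by exact_mod_cast mul_right_cancel₀ h2pi h'
      have : (N : ℤ) ∣ 1 := ⟨n, by linear_combination -hn⟩
      have := Int.le_of_dvd one_pos this
      omega)
    (Or.inl (by field_simp))
  have h2 := key (2 * (2 * Real.pi) / N) (by
      intro n h
      have h' : ((n * N : ℤ) : ℝ) * (2 * Real.pi) = 2 * (2 * Real.pi) := by
        push_cast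
        field_simp at h
        linear_combination (-2 * Real.pi) * h
      have hn : (n * N : ℤ) = 2 := by
        have h'' : ((n * N : ℤ) : ℝ) * (2 * Real.pi) = 2 * (2 * Real.pi) := h'
        have : ((n * N : ℤ) : ℝ) = 2 := mul_right_cancel₀ h2pi (by linarith [h''])
        exact_mod_cast this
      have : (N : ℤ) ∣ 2 := ⟨n, by linear_combination -hn⟩
      have := Int.le_of_dvd two_pos this
      omega)
    (Or.inr (by field_simp))
  have e1 : ∀ i : ℕ, (2 * Real.pi / N) * i = 2 * Real.pi * i / N := fun i => by ring
  have e2 : ∀ i : ℕ, (2 * (2 * Real.pi) / N) * i = 2 * (2 * Real.pi * i / N) := fun i => by ring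
  refine ⟨?_, ?_, ?_, ?_⟩
  · rw [← h1.1]; exact Finset.sum_congr rfl fun i _ => by rw [e1]
  · rw [← h1.2]; exact Finset.sum_congr rfl fun i _ => by rw [e1]
  · rw [← h2.1]; exact Finset.sum_congr rfl fun i _ => by rw [e2]
  · rw [← h2.2]; exact Finset.sum_congr rfl fun i _ => by rw [e2]


theorem fim_diagonal_under_USC (N : ℕ) (hN : 4 ≤ N)
    (α θ a d σ : ℝ) (ha : a ≠ 0) (hd : d ≠ 0) (hσ : σ ≠ 0)
    (F : Matrix (Fin 3) (Fin 3) ℝ)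
    (hF00 : F 0 0 = (4 / a ^ 2) * ∑ i ∈ Finset.Icc 1 N,
      Real.sin α ^ 2 * Real.cos θ ^ 2 * Real.cos (2 * Real.pi * i / N) ^ 2 / (d ^ 2 * σ ^ 2))
    (hF11 : F 1 1 = (4 / a ^ 2) * ∑ i ∈ Finset.Icc 1 N,
      Real.sin α ^ 2 * Real.cos θ ^ 2 * Real.sin (2 * Real.pi * i / N) ^ 2 / (d ^ 2 * σ ^ 2))
    (hF22 : F 2 2 = (4 / a ^ 2) * ∑ i ∈ Finset.Icc 1 N,
      Real.sin α ^ 2 * Real.tan (θ - α) ^ 2 * Real.cos θ ^ 2 / (d ^ 2 * σ ^ 2))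
    (hF01 : F 0 1 = (4 / a ^ 2) * ∑ i ∈ Finset.Icc 1 N,
      Real.sin α ^ 2 * Real.cos θ ^ 2 * Real.sin (2 * Real.pi * i / N) *
        Real.cos (2 * Real.pi * i / N) / (d ^ 2 * σ ^ 2))
    (hF10 : F 1 0 = F 0 1)
    (hF02 : F 0 2 = (4 / a ^ 2) * ∑ i ∈ Finset.Icc 1 N,
      Real.sin α ^ 2 * Real.tan (θ - α) * Real.cos θ ^ 2 *
        Real.cos (2 * Real.pi * i / N) / (d ^ 2 * σ ^ 2))
    (hF20 : F 2 0 = F 0 2)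
    (hF12 : F 1 2 = (4 / a ^ 2) * ∑ i ∈ Finset.Icc 1 N,
      Real.sin α ^ 2 * Real.tan (θ - α) * Real.cos θ ^ 2 *
        Real.sin (2 * Real.pi * i / N) / (d ^ 2 * σ ^ 2))
    (hF21 : F 2 1 = F 1 2) :
    F = Matrix.diagonal
      ![2 * N * Real.sin α ^ 2 * Real.cos θ ^ 2 / (a ^ 2 * d ^ 2 * σ ^ 2),
        2 * N * Real.sin α ^ 2 * Real.cos θ ^ 2 / (a ^ 2 * d ^ 2 * σ ^ 2),
        4 * N * Real.sin α ^ 2 * Real.tan (θ - α) ^ 2 * Real.cos θ ^ 2 / (a ^ 2 * d ^ 2 * σ ^ 2)]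
      ∧ F 0 1 = 0 ∧ F 0 2 = 0 ∧ F 1 2 = 0 ∧ F 0 0 = F 1 1 := by
  obtain ⟨hc1, hs1, hc2, hs2⟩ := sums_spec N hN
  have hcard : (Finset.Icc 1 N).card = N := by rw [Nat.card_Icc]; omega
  set C := Real.sin α ^ 2 * Real.cos θ ^ 2 / (d ^ 2 * σ ^ 2) with hC
  set D := Real.sin α ^ 2 * Real.tan (θ - α) * Real.cos θ ^ 2 / (d ^ 2 * σ ^ 2) with hD
  -- sum of cos²
  have hsum00 : ∑ i ∈ Finset.Icc 1 N,
      Real.sin α ^ 2 * Real.cos θ ^ 2 * Real.cos (2 * Real.pi * i / N) ^ 2 / (d ^ 2 * σ ^ 2)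
      = C * (N / 2) := by
    have : ∀ i ∈ Finset.Icc 1 N,
        Real.sin α ^ 2 * Real.cos θ ^ 2 * Real.cos (2 * Real.pi * i / N) ^ 2 / (d ^ 2 * σ ^ 2)
        = C / 2 + (C / 2) * Real.cos (2 * (2 * Real.pi * i / N)) := by
      intro i _
      rw [hC, Real.cos_sq (2 * Real.pi * i / N)]; ring
    rw [Finset.sum_congr rfl this, Finset.sum_add_distrib, Finset.sum_const, hcard,
      ← Finset.mul_sum, hc2]
    push_cast
    ring
  have hsum11 : ∑ i ∈ Finset.Icc 1 N,
      Real.sin α ^ 2 * Real.cos θ ^ 2 * Real.sin (2 * Real.pi * i / N) ^ 2 / (d ^ 2 * σ ^ 2)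
      = C * (N / 2) := by
    have : ∀ i ∈ Finset.Icc 1 N,
        Real.sin α ^ 2 * Real.cos θ ^ 2 * Real.sin (2 * Real.pi * i / N) ^ 2 / (d ^ 2 * σ ^ 2)
        = C / 2 - (C / 2) * Real.cos (2 * (2 * Real.pi * i / N)) := by
      intro i _
      rw [hC, Real.sin_sq (2 * Real.pi * i / N), Real.cos_sq (2 * Real.pi * i / N)]; ring
    rw [Finset.sum_congr rfl this, Finset.sum_sub_distrib, Finset.sum_const, hcard,
      ← Finset.mul_sum, hc2]
    push_cast
    ring
  have hsum01 : ∑ i ∈ Finset.Icc 1 N,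
      Real.sin α ^ 2 * Real.cos θ ^ 2 * Real.sin (2 * Real.pi * i / N) *
        Real.cos (2 * Real.pi * i / N) / (d ^ 2 * σ ^ 2) = 0 := by
    have : ∀ i ∈ Finset.Icc 1 N,
        Real.sin α ^ 2 * Real.cos θ ^ 2 * Real.sin (2 * Real.pi * i / N) *
          Real.cos (2 * Real.pi * i / N) / (d ^ 2 * σ ^ 2)
        = (C / 2) * Real.sin (2 * (2 * Real.pi * i / N)) := by
      intro i _
      rw [hC, Real.sin_two_mul]; ring
    rw [Finset.sum_congr rfl this, ← Finset.mul_sum, hs2, mul_zero]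
  have hsum02 : ∑ i ∈ Finset.Icc 1 N,
      Real.sin α ^ 2 * Real.tan (θ - α) * Real.cos θ ^ 2 *
        Real.cos (2 * Real.pi * i / N) / (d ^ 2 * σ ^ 2) = 0 := by
    have : ∀ i ∈ Finset.Icc 1 N,
        Real.sin α ^ 2 * Real.tan (θ - α) * Real.cos θ ^ 2 *
          Real.cos (2 * Real.pi * i / N) / (d ^ 2 * σ ^ 2)
        = D * Real.cos (2 * Real.pi * i / N) := by
      intro i _; rw [hD]; ring
    rw [Finset.sum_congr rfl this, ← Finset.mul_sum, hc1, mul_zero]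
  have hsum12 : ∑ i ∈ Finset.Icc 1 N,
      Real.sin α ^ 2 * Real.tan (θ - α) * Real.cos θ ^ 2 *
        Real.sin (2 * Real.pi * i / N) / (d ^ 2 * σ ^ 2) = 0 := by
    have : ∀ i ∈ Finset.Icc 1 N,
        Real.sin α ^ 2 * Real.tan (θ - α) * Real.cos θ ^ 2 *
          Real.sin (2 * Real.pi * i / N) / (d ^ 2 * σ ^ 2)
        = D * Real.sin (2 * Real.pi * i / N) := by
      intro i _; rw [hD]; ring
    rw [Finset.sum_congr rfl this, ← Finset.mul_sum, hs1, mul_zero]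
  have h00 : F 0 0 = 2 * N * Real.sin α ^ 2 * Real.cos θ ^ 2 / (a ^ 2 * d ^ 2 * σ ^ 2) := by
    rw [hF00, hsum00, hC]; field_simp; ring
  have h11 : F 1 1 = 2 * N * Real.sin α ^ 2 * Real.cos θ ^ 2 / (a ^ 2 * d ^ 2 * σ ^ 2) := by
    rw [hF11, hsum11, hC]; field_simp; ring
  have h22 : F 2 2 = 4 * N * Real.sin α ^ 2 * Real.tan (θ - α) ^ 2 * Real.cos θ ^ 2 /
      (a ^ 2 * d ^ 2 * σ ^ 2) := by
    rw [hF22, Finset.sum_const, hcard, nsmul_eq_mul]; field_simp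
  have h01 : F 0 1 = 0 := by rw [hF01, hsum01, mul_zero]
  have h02 : F 0 2 = 0 := by rw [hF02, hsum02, mul_zero]
  have h12 : F 1 2 = 0 := by rw [hF12, hsum12, mul_zero]
  refine ⟨?_, h01, h02, h12, by rw [h00, h11]⟩
  ext i j
  fin_cases i <;> fin_cases j <;>
    simp [Matrix.diagonal, h00, h11, h22, h01, h02, h12, hF10, hF20, hF21]
end

section
/- Let a, b, x, y, z, x_i, y_i, z_i be real numbers with a > 0, z ≥ z_i, (x − x_i)² + (y − y_i)² > 0, and 2b/a + z + z_i > 0. For a real variable v, define d(v) = √((v − x_i)² + (y − y_i)²), θ(v) = arctan((z − z_i)/d(v)), α(v) = arctan(d(v)/(2b/a + z + z_i)), and T(v) = (1/a)·[ln((1 + sin(θ(v) + α(v)))/cos(θ(v) + α(v))) − ln((1 + sin(θ(v) − α(v)))/cos(θ(v) − α(v)))]. Assume θ(x) + α(x) < π/2. Then T has derivative (2/a)·(x − x_i)/(l·r) at the point x, where d = d(x), l = √(d² + (2b/a + z + z_i)²), and r = √(d² + (z − z_i)²). -/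
open Real

lemma aux_log_deriv (g : ℝ → ℝ) (g' x : ℝ) (hg : HasDerivAt g g' x)
    (hc : 0 < Real.cos (g x)) (hs : 0 < 1 + Real.sin (g x)) :
    HasDerivAt (fun v => Real.log ((1 + Real.sin (g v)) / Real.cos (g v)))
      (g' / Real.cos (g x)) x := by
  have h1 : HasDerivAt (fun v => 1 + Real.sin (g v)) (Real.cos (g x) * g') x :=
    (hg.sin).const_add 1
  have h2 : HasDerivAt (fun v => Real.cos (g v)) (-Real.sin (g x) * g') x := hg.cos
  have h3 := h1.div h2 (ne_of_gt hc)
  have h4 := h3.log (div_pos hs hc).ne'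
  convert h4 using 1
  · rfl
  have hpy := Real.sin_sq_add_cos_sq (g x)
  simp only [Pi.div_apply]
  field_simp
  linear_combination (-g') * hpy

lemma aux_one_add_sin_pos (u : ℝ) (h1 : -(Real.pi/2) < u) (h2 : u < Real.pi/2) :
    0 < 1 + Real.sin u := by
  have hm := Real.strictMonoOn_sin (a := -(Real.pi/2)) (b := u)
    ⟨le_refl _, by linarith [Real.pi_pos]⟩ ⟨le_of_lt h1, le_of_lt h2⟩ h1
  simp [Real.sin_pi_div_two] at hm
  linarith

set_option maxHeartbeats 1000000 in
theorem deriv_rtt_wrt_x (a b x y z xi yi zi : ℝ)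
    (ha : 0 < a) (hz : zi ≤ z)
    (hpos : 0 < (x - xi) ^ 2 + (y - yi) ^ 2)
    (hb : 0 < 2 * b / a + z + zi)
    (dd θf αf T : ℝ → ℝ)
    (hdd : ∀ v, dd v = Real.sqrt ((v - xi) ^ 2 + (y - yi) ^ 2))
    (hθf : ∀ v, θf v = Real.arctan ((z - zi) / dd v))
    (hαf : ∀ v, αf v = Real.arctan (dd v / (2 * b / a + z + zi)))
    (hT : ∀ v, T v = (1 / a) *
        (Real.log ((1 + Real.sin (θf v + αf v)) / Real.cos (θf v + αf v)) -
         Real.log ((1 + Real.sin (θf v - αf v)) / Real.cos (θf v - αf v))))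
    (hang : θf x + αf x < Real.pi / 2)
    (d l r : ℝ)
    (hd : d = dd x)
    (hl : l = Real.sqrt (d ^ 2 + (2 * b / a + z + zi) ^ 2))
    (hr : r = Real.sqrt (d ^ 2 + (z - zi) ^ 2)) :
    HasDerivAt T ((2 / a) * (x - xi) / (l * r)) x := by
  set c := 2 * b / a + z + zi with hc
  set w := z - zi with hw
  have hw0 : 0 ≤ w := by rw [hw]; linarith
  clear_value c w
  have hd0 : 0 < d := by
    rw [hd, hdd]; exact Real.sqrt_pos.mpr hpos
  have hr2 : r ^ 2 = d ^ 2 + w ^ 2 := by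
    rw [hr]; exact Real.sq_sqrt (by positivity)
  have hl2 : l ^ 2 = d ^ 2 + c ^ 2 := by
    rw [hl]; exact Real.sq_sqrt (by positivity)
  have hr0 : 0 < r := by rw [hr]; exact Real.sqrt_pos.mpr (by nlinarith)
  have hl0 : 0 < l := by rw [hl]; exact Real.sqrt_pos.mpr (by nlinarith)
  -- trig values
  have hsqθ : Real.sqrt (1 + (w/d)^2) = r/d := by
    rw [show (1:ℝ) + (w/d)^2 = (r/d)^2 by field_simp; linarith [hr2]]
    exact Real.sqrt_sq (by positivity)
  have hsqα : Real.sqrt (1 + (d/c)^2) = l/c := by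
    rw [show (1:ℝ) + (d/c)^2 = (l/c)^2 by field_simp; linarith [hl2]]
    exact Real.sqrt_sq (by positivity)
  have hcosθ : Real.cos (θf x) = d / r := by
    rw [hθf, ← hd, Real.cos_arctan, hsqθ, one_div_div]
  have hsinθ : Real.sin (θf x) = w / r := by
    rw [hθf, ← hd, Real.sin_arctan, hsqθ]
    field_simp
  have hcosα : Real.cos (αf x) = c / l := by
    rw [hαf, ← hd, Real.cos_arctan, hsqα, one_div_div]
  have hsinα : Real.sin (αf x) = d / l := by
    rw [hαf, ← hd, Real.sin_arctan, hsqα]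
    field_simp
  -- angle bounds
  have hθ0 : 0 ≤ θf x := by
    rw [hθf, ← hd, ← Real.arctan_zero]
    exact Real.arctan_strictMono.monotone (by positivity)
  have hθlt : θf x < Real.pi/2 := by rw [hθf]; exact Real.arctan_lt_pi_div_two _
  have hα0 : 0 < αf x := by
    rw [hαf, ← hd, ← Real.arctan_zero]
    exact Real.arctan_strictMono (by positivity)
  have hαlt : αf x < Real.pi/2 := by rw [hαf]; exact Real.arctan_lt_pi_div_two _
  have hpi := Real.pi_pos
  have hcosp : 0 < Real.cos (θf x + αf x) :=
    Real.cos_pos_of_mem_Ioo ⟨by linarith, hang⟩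
  have hcosm : 0 < Real.cos (θf x - αf x) :=
    Real.cos_pos_of_mem_Ioo ⟨by linarith, by linarith⟩
  have hsinp : 0 < 1 + Real.sin (θf x + αf x) :=
    aux_one_add_sin_pos _ (by linarith) hang
  have hsinm : 0 < 1 + Real.sin (θf x - αf x) :=
    aux_one_add_sin_pos _ (by linarith) (by linarith)
  -- derivative of dd
  set D : ℝ := (x - xi) / d with hD
  have hdd' : HasDerivAt dd D x := by
    have h1 : HasDerivAt (fun v : ℝ => (v - xi)^2 + (y - yi)^2) (2*(x - xi)) x := by
      have := (((hasDerivAt_id x).sub_const xi).pow 2).add_const ((y - yi)^2)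
      simpa using this
    have h2 := h1.sqrt (by positivity)
    rw [show dd = fun v => Real.sqrt ((v - xi)^2 + (y - yi)^2) from funext hdd]
    convert h2 using 1
    rw [hD, show Real.sqrt ((x - xi)^2 + (y - yi)^2) = d from (hd.trans (hdd x)).symm]
    ring
  have hdne : dd x ≠ 0 := by rw [← hd]; exact ne_of_gt hd0
  -- derivative of θf
  have hθ' : HasDerivAt θf (-(w * D) / r^2) x := by
    have h1 := ((hasDerivAt_const x w).div hdd' hdne).arctan
    rw [show θf = fun v => Real.arctan (w / dd v) from funext hθf]
    convert h1 using 1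
    · rfl
    simp only [Pi.div_apply]
    rw [← hd, show (1:ℝ) + (w / d)^2 = r^2/d^2 by rw [hr2]; field_simp]
    field_simp
    ring
  -- derivative of αf
  have hα' : HasDerivAt αf (c * D / l^2) x := by
    have h1 := (hdd'.div_const c).arctan
    rw [show αf = fun v => Real.arctan (dd v / c) from funext hαf]
    convert h1 using 1
    rw [← hd, show (1:ℝ) + (d / c)^2 = l^2/c^2 by rw [hl2]; field_simp; ring]
    field_simp
  -- assemble
  have hup : HasDerivAt (fun v => θf v + αf v) (-(w * D) / r^2 + c * D / l^2) x := hθ'.add hα'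
  have hum : HasDerivAt (fun v => θf v - αf v) (-(w * D) / r^2 - c * D / l^2) x := hθ'.sub hα'
  have hLp := aux_log_deriv _ _ _ hup hcosp hsinp
  have hLm := aux_log_deriv _ _ _ hum hcosm hsinm
  have hTd : HasDerivAt T ((1/a) *
      ((-(w * D) / r^2 + c * D / l^2) / Real.cos (θf x + αf x) -
       (-(w * D) / r^2 - c * D / l^2) / Real.cos (θf x - αf x))) x := by
    rw [show T = fun v => (1 / a) *
        (Real.log ((1 + Real.sin (θf v + αf v)) / Real.cos (θf v + αf v)) -
         Real.log ((1 + Real.sin (θf v - αf v)) / Real.cos (θf v - αf v))) from funext hT]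
    exact (hLp.sub hLm).const_mul (1/a)
  -- nonvanishing of c ∓ w
  have hcm : 0 < c - w := by
    have h := hcosp
    rw [Real.cos_add, hcosθ, hsinθ, hcosα, hsinα] at h
    have h2 : 0 < (d * (c - w)) / (r * l) := by
      have : d / r * (c / l) - w / r * (d / l) = (d * (c - w)) / (r * l) := by
        field_simp
      linarith [this ▸ h]
    rcases div_pos_iff.mp h2 with ⟨h3, _⟩ | ⟨_, h4⟩
    · nlinarith
    · nlinarith [mul_pos hr0 hl0]
  have hcp : 0 < c + w := by linarith
  -- the two quotients
  have hnum1 : -(w * D) / r ^ 2 + c * D / l ^ 2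
      = (c - w) * (d ^ 2 - c * w) * D / (r ^ 2 * l ^ 2) := by
    rw [hr2, hl2]; field_simp; ring
  have hnum2 : -(w * D) / r ^ 2 - c * D / l ^ 2
      = -((c + w) * (d ^ 2 + c * w) * D) / (r ^ 2 * l ^ 2) := by
    rw [hr2, hl2]; field_simp; ring
  have key1 : (-(w * D) / r ^ 2 + c * D / l ^ 2) / Real.cos (θf x + αf x)
      = (d ^ 2 - c * w) * D / (d * l * r) := by
    rw [Real.cos_add, hcosθ, hsinθ, hcosα, hsinα, hnum1,
      show d / r * (c / l) - w / r * (d / l) = (d * (c - w)) / (r * l) by field_simp]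
    field_simp [hr0.ne', hl0.ne', hd0.ne', hcm.ne']
  have key2 : (-(w * D) / r ^ 2 - c * D / l ^ 2) / Real.cos (θf x - αf x)
      = -((d ^ 2 + c * w) * D) / (d * l * r) := by
    rw [Real.cos_sub, hcosθ, hsinθ, hcosα, hsinα, hnum2,
      show d / r * (c / l) + w / r * (d / l) = (d * (c + w)) / (r * l) by field_simp]
    field_simp [hr0.ne', hl0.ne', hd0.ne', hcp.ne']
  rw [key1, key2] at hTd
  convert hTd using 1
  rw [hD]
  field_simp
  ring
end

section
/- Let a, b, z, z_i, d be real numbers with a > 0, d > 0, z ≥ z_i, and 2b/a + z + z_i > 0. For a real variable v, define θ(v) = arctan((v − z_i)/d), α(v) = arctan(d/(2b/a + v + z_i)), and T(v) = (1/a)·[ln((1 + sin(θ(v) + α(v)))/cos(θ(v) + α(v))) − ln((1 + sin(θ(v) − α(v)))/cos(θ(v) − α(v)))]. Assume θ(z) + α(z) < π/2. Then T has derivative (2/a)·tan(θ(z) − α(z))·sin(α(z))/r at the point z, where r = √(d² + (z − z_i)²). -/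
open Real

lemma hasDerivAt_logsec (x : ℝ) (hx : 0 < Real.cos x) :
    HasDerivAt (fun y => Real.log ((1 + Real.sin y) / Real.cos y)) (1 / Real.cos x) x := by
  have h1 : 0 < 1 + Real.sin x := by
    nlinarith [Real.sin_sq_add_cos_sq x, Real.neg_one_le_sin x]
  have hu : HasDerivAt (fun y => (1 + Real.sin y) / Real.cos y)
      ((Real.cos x * Real.cos x - (1 + Real.sin x) * (-Real.sin x)) / (Real.cos x)^2) x :=
    ((Real.hasDerivAt_sin x).const_add 1).div (Real.hasDerivAt_cos x) (ne_of_gt hx)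
  have hne : (1 + Real.sin x) / Real.cos x ≠ 0 := by positivity
  have h := hu.log hne
  convert h using 1
  have hs := Real.sin_sq_add_cos_sq x
  field_simp
  nlinarith [hs]

lemma aux_theta (zi d z : ℝ) (hd : 0 < d) :
    HasDerivAt (fun v => Real.arctan ((v - zi) / d)) (d / (d^2 + (z - zi)^2)) z := by
  have hin : HasDerivAt (fun v : ℝ => (v - zi) / d) (1 / d) z := by
    simpa using ((hasDerivAt_id z).sub_const zi).div_const d
  have h := (Real.hasDerivAt_arctan ((z - zi) / d)).comp z hin
  refine h.congr_deriv ?_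
  have h2 : d^2 + (z-zi)^2 > 0 := by positivity
  field_simp

lemma aux_alpha (c zi d z : ℝ) (hd : 0 < d) (he : 0 < c + z + zi) :
    HasDerivAt (fun v => Real.arctan (d / (c + v + zi)))
      (-d / ((c + z + zi)^2 + d^2)) z := by
  have hne : c + z + zi ≠ 0 := ne_of_gt he
  have hin : HasDerivAt (fun v : ℝ => d / (c + v + zi)) (-d / (c + z + zi)^2) z := by
    have h1 : HasDerivAt (fun v : ℝ => c + v + zi) 1 z := by
      simpa using ((hasDerivAt_id z).const_add c).add_const zi
    have h := (hasDerivAt_const z d).div h1 hne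
    refine h.congr_deriv ?_
    field_simp
    ring
  have h := (Real.hasDerivAt_arctan (d / (c + z + zi))).comp z hin
  refine h.congr_deriv ?_
  have h2 : (c+z+zi)^2 + d^2 > 0 := by positivity
  field_simp

lemma alg_key (a P d e r q : ℝ) (ha : a ≠ 0) (hd : d ≠ 0) (hr : r ≠ 0) (hq : q ≠ 0)
    (h1 : e - P ≠ 0) (h2 : e + P ≠ 0)
    (hr2 : r^2 = d^2 + P^2) (hq2 : q^2 = e^2 + d^2) :
    2 / a * (((P*e - d^2)/(r*q)) / ((d*(e+P))/(r*q))) * (d/q) / r =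
    1 / a * (1 / ((d*(e-P))/(r*q)) * (d/(d^2+P^2) + -d/(e^2+d^2)) -
             1 / ((d*(e+P))/(r*q)) * (d/(d^2+P^2) - -d/(e^2+d^2))) := by
  have e1 : d/(d^2+P^2) + -d/(e^2+d^2) = d*(e-P)*(e+P)/(r^2*q^2) := by
    rw [hr2, hq2]
    have hA : d^2+P^2 ≠ 0 := by intro h; apply hr; nlinarith [hr2]
    have hB : e^2+d^2 ≠ 0 := by intro h; apply hq; nlinarith [hq2]
    field_simp
    ring
  have e2 : d/(d^2+P^2) - -d/(e^2+d^2) = d*(q^2+r^2)/(r^2*q^2) := by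
    rw [hr2, hq2]
    have hA : d^2+P^2 ≠ 0 := by intro h; apply hr; nlinarith [hr2]
    have hB : e^2+d^2 ≠ 0 := by intro h; apply hq; nlinarith [hq2]
    field_simp
    ring
  rw [e1, e2]
  have e3 : 1 / ((d*(e-P))/(r*q)) * (d*(e-P)*(e+P)/(r^2*q^2)) = (e+P)/(r*q) := by
    field_simp
  have e4 : 1 / ((d*(e+P))/(r*q)) * (d*(q^2+r^2)/(r^2*q^2)) = (q^2+r^2)/(r*q*(e+P)) := by
    field_simp
  rw [e3, e4]
  have e5 : ((P*e - d^2)/(r*q)) / ((d*(e+P))/(r*q)) = (P*e-d^2)/(d*(e+P)) := by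
    field_simp
  rw [e5]
  rw [div_sub_div _ _ (by positivity : r*q ≠ 0) (by exact mul_ne_zero (mul_ne_zero hr hq) h2)]
  field_simp
  linear_combination hq2 + hr2

set_option maxHeartbeats 1000000 in
theorem deriv_rtt_wrt_z (a b z zi d : ℝ)
    (ha : 0 < a) (hd : 0 < d) (hz : zi ≤ z)
    (hb : 0 < 2 * b / a + z + zi)
    (θf αf T : ℝ → ℝ)
    (hθf : ∀ v, θf v = Real.arctan ((v - zi) / d))
    (hαf : ∀ v, αf v = Real.arctan (d / (2 * b / a + v + zi)))
    (hT : ∀ v, T v = (1 / a) *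
        (Real.log ((1 + Real.sin (θf v + αf v)) / Real.cos (θf v + αf v)) -
         Real.log ((1 + Real.sin (θf v - αf v)) / Real.cos (θf v - αf v))))
    (hang : θf z + αf z < Real.pi / 2)
    (r : ℝ) (hr : r = Real.sqrt (d ^ 2 + (z - zi) ^ 2)) :
    HasDerivAt T ((2 / a) * Real.tan (θf z - αf z) * Real.sin (αf z) / r) z := by
  have hθfe : θf = fun v => Real.arctan ((v - zi) / d) := funext hθf
  have hαfe : αf = fun v => Real.arctan (d / (2 * b / a + v + zi)) := funext hαf
  subst hθfe hαfe
  simp only [] at hang ⊢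
  -- abbreviations
  set e : ℝ := 2 * b / a + z + zi with he_def
  set θ : ℝ := Real.arctan ((z - zi) / d) with hθ_def
  set α : ℝ := Real.arctan (d / e) with hα_def
  set q : ℝ := Real.sqrt (e^2 + d^2) with hq_def
  have hrpos : 0 < r := by rw [hr]; positivity
  have hqpos : 0 < q := by rw [hq_def]; positivity
  have hr2 : r^2 = d^2 + (z - zi)^2 := by rw [hr]; exact Real.sq_sqrt (by positivity)
  have hq2 : q^2 = e^2 + d^2 := by rw [hq_def]; exact Real.sq_sqrt (by positivity)
  -- trig values
  have h1 : Real.sqrt (1 + ((z - zi)/d)^2) = r / d := by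
    rw [show 1 + ((z - zi)/d)^2 = (r/d)^2 by field_simp; linarith [hr2]]
    exact Real.sqrt_sq (by positivity)
  have h2 : Real.sqrt (1 + (d/e)^2) = q / e := by
    rw [show 1 + (d/e)^2 = (q/e)^2 by field_simp; linarith [hq2]]
    exact Real.sqrt_sq (by positivity)
  have hcosθ : Real.cos θ = d / r := by rw [hθ_def, Real.cos_arctan, h1, one_div_div]
  have hsinθ : Real.sin θ = (z - zi) / r := by
    rw [hθ_def, Real.sin_arctan, h1]; field_simp
  have hcosα : Real.cos α = e / q := by rw [hα_def, Real.cos_arctan, h2, one_div_div]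
  have hsinα : Real.sin α = d / q := by
    rw [hα_def, Real.sin_arctan, h2]; field_simp
  -- angle bounds
  have hθ0 : 0 ≤ θ := by
    have := Real.arctan_strictMono.monotone (div_nonneg (by linarith : (0:ℝ) ≤ z - zi) hd.le)
    rwa [Real.arctan_zero] at this
  have hα0 : 0 < α := by
    have := Real.arctan_strictMono (div_pos hd hb)
    rwa [Real.arctan_zero] at this
  have hθlt : θ < Real.pi / 2 := Real.arctan_lt_pi_div_two _
  have hαlt : α < Real.pi / 2 := Real.arctan_lt_pi_div_two _
  have hcs : 0 < Real.cos (θ + α) :=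
    Real.cos_pos_of_mem_Ioo ⟨by linarith [Real.pi_pos], hang⟩
  have hct : 0 < Real.cos (θ - α) :=
    Real.cos_pos_of_mem_Ioo ⟨by linarith, by linarith⟩
  -- expanded trig values
  have hcoss : Real.cos (θ + α) = d * (e - (z - zi)) / (r * q) := by
    rw [Real.cos_add, hcosθ, hsinθ, hcosα, hsinα]
    field_simp
  have hcost : Real.cos (θ - α) = d * (e + (z - zi)) / (r * q) := by
    rw [Real.cos_sub, hcosθ, hsinθ, hcosα, hsinα]
    field_simp
  have hsint : Real.sin (θ - α) = ((z - zi) * e - d^2) / (r * q) := by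
    rw [Real.sin_sub, hcosθ, hsinθ, hcosα, hsinα]
    field_simp
  have heP : 0 < e - (z - zi) := by
    rw [hcoss] at hcs
    have hrq : 0 < r * q := mul_pos hrpos hqpos
    have hX : 0 < d * (e - (z - zi)) := by
      have h := mul_pos hcs hrq
      rwa [div_mul_cancel₀ _ (ne_of_gt hrq)] at h
    nlinarith [hX, hd]
  have hePp : 0 < e + (z - zi) := by nlinarith
  -- derivative construction
  have hθd : HasDerivAt (fun v => Real.arctan ((v - zi) / d))
      (d / (d^2 + (z - zi)^2)) z := aux_theta zi d z hd
  have hαd : HasDerivAt (fun v => Real.arctan (d / (2 * b / a + v + zi)))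
      (-d / (e^2 + d^2)) z := aux_alpha (2 * b / a) zi d z hd hb
  have hg := hθd.add hαd
  have hh := hθd.sub hαd
  have hFs := (hasDerivAt_logsec (θ + α) hcs).comp z hg
  have hFt := (hasDerivAt_logsec (θ - α) hct).comp z hh
  have hTd : HasDerivAt T
      (1 / a * (1 / Real.cos (θ + α) * (d / (d^2 + (z - zi)^2) + -d / (e^2 + d^2)) -
        1 / Real.cos (θ - α) * (d / (d^2 + (z - zi)^2) - -d / (e^2 + d^2)))) z := by
    have := (hFs.sub hFt).const_mul (1 / a)
    convert this using 1
    rfl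
    rfl
    funext v
    rw [hT v]
    simp [Function.comp]
  convert hTd using 1
  rw [Real.tan_eq_sin_div_cos, hsint, hcost, hcoss, hsinα]
  exact alg_key a (z - zi) d e r q (ne_of_gt ha) (ne_of_gt hd) (ne_of_gt hrpos)
    (ne_of_gt hqpos) (ne_of_gt heP) (ne_of_gt hePp) hr2 hq2
end
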